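/- Let M ∈ ℝ^{m×m} be symmetric positive semidefinite and A ∈ ℝ^{m×n}. If M is positive definite, then Null(A^⊤ M A) = Null(A). More generally, Null(A^⊤ M A) = Null(A) if and only if {x : Ax = b_{Range(A)}} = {x : M^{1/2}Ax = M^{1/2} b_{Range(A)}} for every b ∈ ℝ^m. -/

import Mathlib

open Matrix

/-- The four Penrose conditions characterizing the Moore–Penrose pseudoinverse. -/
def IsMoorePenrose {m n : ℕ} (A : Matrix (Fin m) (Fin n) ℝ)
    (B : Matrix (Fin n) (Fin m) ℝ) : Prop :=
  A * B * A = A ∧ B * A * B = B ∧ (A * B)ᵀ = A * B ∧ (B * A)ᵀ = B * A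

/-- The square root of a positive semidefinite matrix (the definition of
`Matrix.PosSemidef.sqrt` in the older Mathlib, since removed). -/
noncomputable def Matrix.PosSemidef.sqrt {m : ℕ} {M : Matrix (Fin m) (Fin m) ℝ}
    (hA : M.PosSemidef) : Matrix (Fin m) (Fin m) ℝ :=
  (hA.1.eigenvectorUnitary : Matrix (Fin m) (Fin m) ℝ) *
    diagonal ((↑) ∘ (Real.sqrt ·) ∘ hA.1.eigenvalues) *
    (star (hA.1.eigenvectorUnitary : Matrix (Fin m) (Fin m) ℝ))

lemma Matrix.PosSemidef.sqrt_transpose' {m : ℕ} {M : Matrix (Fin m) (Fin m) ℝ}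
    (hM : M.PosSemidef) : (hM.sqrt)ᵀ = hM.sqrt := by
  unfold Matrix.PosSemidef.sqrt
  rw [transpose_mul, transpose_mul, diagonal_transpose, star_eq_conjTranspose,
    conjTranspose_eq_transpose_of_trivial, transpose_transpose, Matrix.mul_assoc]

lemma Matrix.PosSemidef.sqrt_mul_self' {m : ℕ} {M : Matrix (Fin m) (Fin m) ℝ}
    (hM : M.PosSemidef) : hM.sqrt * hM.sqrt = M := by
  unfold Matrix.PosSemidef.sqrt
  have hU : star (hM.1.eigenvectorUnitary : Matrix (Fin m) (Fin m) ℝ) *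
      (hM.1.eigenvectorUnitary : Matrix (Fin m) (Fin m) ℝ) = 1 := Unitary.coe_star_mul_self _
  have hD : diagonal ((↑) ∘ (Real.sqrt ·) ∘ hM.1.eigenvalues) *
      diagonal ((↑) ∘ (Real.sqrt ·) ∘ hM.1.eigenvalues) =
      diagonal ((↑) ∘ hM.1.eigenvalues : Fin m → ℝ) := by
    rw [diagonal_mul_diagonal]; congr 1; funext i
    simp [Real.mul_self_sqrt (hM.eigenvalues_nonneg i)]
  conv_rhs => rw [hM.1.spectral_theorem, Unitary.conjStarAlgAut_apply]
  simp only [Matrix.mul_assoc]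
  rw [← Matrix.mul_assoc (star _) _, hU, Matrix.one_mul,
    ← Matrix.mul_assoc (diagonal _) (diagonal _), hD]
  rfl

lemma conj_null_aux {m n : ℕ} (B : Matrix (Fin m) (Fin n) ℝ) (x : Fin n → ℝ) :
    (Bᵀ * B).mulVec x = 0 ↔ B.mulVec x = 0 := by
  constructor
  · intro h
    have h0 : x ⬝ᵥ (Bᵀ * B).mulVec x = 0 := by rw [h]; simp
    rw [← mulVec_mulVec, dotProduct_mulVec, vecMul_transpose] at h0
    exact dotProduct_self_eq_zero.mp h0
  · intro h
    rw [← mulVec_mulVec, h, mulVec_zero]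

/-- If `M` is PSD then: (a) `M` positive definite implies `Null(AᵀMA) = Null(A)`; and
(b) `Null(AᵀMA) = Null(A)` iff for every `b`, `{x : Ax = AA†b} = {x : M^{1/2}Ax = M^{1/2}AA†b}`. -/
theorem null_AtMA_eq_null_iff {m n : ℕ} (A : Matrix (Fin m) (Fin n) ℝ)
    (M : Matrix (Fin m) (Fin m) ℝ) (hM : M.PosSemidef)
    (Ad : Matrix (Fin n) (Fin m) ℝ) (hAd : IsMoorePenrose A Ad) :
    (M.PosDef →
      {x : Fin n → ℝ | (Aᵀ * M * A).mulVec x = 0} = {x : Fin n → ℝ | A.mulVec x = 0}) ∧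
    ({x : Fin n → ℝ | (Aᵀ * M * A).mulVec x = 0} = {x : Fin n → ℝ | A.mulVec x = 0} ↔
      ∀ b : Fin m → ℝ,
        {x : Fin n → ℝ | A.mulVec x = A.mulVec (Ad.mulVec b)} =
          {x : Fin n → ℝ | hM.sqrt.mulVec (A.mulVec x) =
            hM.sqrt.mulVec (A.mulVec (Ad.mulVec b))}) := by
  set S := hM.sqrt with hS
  have hSsym : Sᵀ = S := by
    exact hM.sqrt_transpose'
  have hSS : S * S = M := hM.sqrt_mul_self'
  have hfact : Aᵀ * M * A = (S * A)ᵀ * (S * A) := by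
    rw [transpose_mul, hSsym, ← hSS]; rw [Matrix.mul_assoc, Matrix.mul_assoc, Matrix.mul_assoc]
  -- Null(AᵀMA) = Null(SA)
  have key : ∀ x : Fin n → ℝ, (Aᵀ * M * A).mulVec x = 0 ↔ S.mulVec (A.mulVec x) = 0 := by
    intro x
    rw [hfact, conj_null_aux, ← mulVec_mulVec]
  constructor
  · -- part (a)
    intro hMd
    ext x
    simp only [Set.mem_setOf_eq, key]
    constructor
    · intro h
      by_contra hne
      have hpos := hMd.dotProduct_mulVec_pos (x := A.mulVec x) hne
      have : star (A.mulVec x) ⬝ᵥ M.mulVec (A.mulVec x) = 0 := by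
        rw [← hSS, ← mulVec_mulVec, h, mulVec_zero, dotProduct_zero]
      rw [this] at hpos
      exact lt_irrefl _ hpos
    · intro h
      rw [h, mulVec_zero]
  · constructor
    · -- forward
      intro hnull b
      ext x
      simp only [Set.mem_setOf_eq]
      constructor
      · intro h; rw [h]
      · intro h
        have h2 : S.mulVec (A.mulVec (x - Ad.mulVec b)) = 0 := by
          rw [mulVec_sub, mulVec_sub, h, sub_self]
        have h3 : (x - Ad.mulVec b) ∈ {x : Fin n → ℝ | (Aᵀ * M * A).mulVec x = 0} := by
          simp only [Set.mem_setOf_eq, key]; exact h2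
        rw [hnull] at h3
        simp only [Set.mem_setOf_eq, mulVec_sub, sub_eq_zero] at h3
        exact h3
    · -- backward
      intro h
      ext x
      simp only [Set.mem_setOf_eq, key]
      constructor
      · intro hx
        have hb := h (A.mulVec x)
        have hAdA : A.mulVec (Ad.mulVec (A.mulVec x)) = A.mulVec x := by
          rw [mulVec_mulVec, mulVec_mulVec, hAd.1]
        have h0 : (0 : Fin n → ℝ) ∈ {y : Fin n → ℝ |
            S.mulVec (A.mulVec y) = S.mulVec (A.mulVec (Ad.mulVec (A.mulVec x)))} := by
          simp only [Set.mem_setOf_eq, mulVec_zero, hAdA, hx]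
        rw [← hb] at h0
        simp only [Set.mem_setOf_eq, mulVec_zero, hAdA] at h0
        exact h0.symm
      · intro hx
        rw [hx, mulVec_zero]
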